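/- Fix α ∈ ℝ and k > 0, let I ⊆ (0,∞) be an open interval, and let f : I → ℝ be differentiable with f'(x)² = (1 − k²x² − α²x^{2α})/x² on I. Define φ : I × ℝ × ℝ → ℝ⁵ by φ(x,y,z) = (f(x), kx·cos(y/(kx)), kx·sin(y/(kx)), x^α·cos(z/x^α), x^α·sin(z/x^α)). Then at every point: ⟨∂ₓφ,∂ₓφ⟩ = (1 + y² + α²z²)/x², ⟨∂ₓφ,∂_yφ⟩ = −y/x, ⟨∂ₓφ,∂_zφ⟩ = −αz/x, ⟨∂_yφ,∂_yφ⟩ = 1, ⟨∂_zφ,∂_zφ⟩ = 1, ⟨∂_yφ,∂_zφ⟩ = 0. Consequently φ pulls back the Euclidean metric on ℝ⁵ to the left-invariant metric x^{-2}(dx² + (x dy − y dx)² + (x dz − α z dx)²). -/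

import Mathlib

open Matrix Real

theorem lie_group_embedding_R5 (α k a b : ℝ) (hk : 0 < k)
    (hI : Set.Ioo a b ⊆ Set.Ioi (0 : ℝ))
    (f f' : ℝ → ℝ)
    (hf : ∀ x ∈ Set.Ioo a b, HasDerivAt f (f' x) x)
    (hcon : ∀ x ∈ Set.Ioo a b,
      f' x ^ 2 = (1 - k ^ 2 * x ^ 2 - α ^ 2 * x ^ (2 * α)) / x ^ 2)
    (φ : ℝ → ℝ → ℝ → (Fin 5 → ℝ))
    (hφ : ∀ x y z, φ x y z =
      ![f x, k * x * Real.cos (y / (k * x)), k * x * Real.sin (y / (k * x)),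
        x ^ α * Real.cos (z / x ^ α), x ^ α * Real.sin (z / x ^ α)]) :
    ∀ x ∈ Set.Ioo a b, ∀ y z : ℝ,
      (deriv (fun s => φ s y z) x) ⬝ᵥ (deriv (fun s => φ s y z) x)
        = (1 + y ^ 2 + α ^ 2 * z ^ 2) / x ^ 2 ∧
      (deriv (fun s => φ s y z) x) ⬝ᵥ (deriv (fun s => φ x s z) y) = -y / x ∧
      (deriv (fun s => φ s y z) x) ⬝ᵥ (deriv (fun s => φ x y s) z) = -α * z / x ∧
      (deriv (fun s => φ x s z) y) ⬝ᵥ (deriv (fun s => φ x s z) y) = 1 ∧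
      (deriv (fun s => φ x y s) z) ⬝ᵥ (deriv (fun s => φ x y s) z) = 1 ∧
      (deriv (fun s => φ x s z) y) ⬝ᵥ (deriv (fun s => φ x y s) z) = 0 := by
  intro x hxm y z
  have hx : 0 < x := hI hxm
  have hx0 : x ≠ 0 := ne_of_gt hx
  have hk0 : k ≠ 0 := ne_of_gt hk
  have hkx : k * x ≠ 0 := mul_ne_zero hk0 hx0
  have hxa : x ^ α ≠ 0 := ne_of_gt (Real.rpow_pos_of_pos hx α)
  have hα1 : x ^ (α - 1) = x ^ α / x := by
    rw [Real.rpow_sub hx, Real.rpow_one]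
  -- derivative of inner functions
  have hks : HasDerivAt (fun s : ℝ => k * s) k x := by
    simpa using (hasDerivAt_id x).const_mul k
  have hu : HasDerivAt (fun s : ℝ => y / (k * s)) (y * (-k / (k * x) ^ 2)) x := by
    simpa [div_eq_mul_inv] using (hks.inv hkx).const_mul y
  have hp : HasDerivAt (fun s : ℝ => s ^ α) (α * x ^ (α - 1)) x :=
    Real.hasDerivAt_rpow_const (Or.inl hx0)
  have hv : HasDerivAt (fun s : ℝ => z / s ^ α)
      (z * (-(α * x ^ (α - 1)) / (x ^ α) ^ 2)) x := by
    simpa [div_eq_mul_inv] using (hp.inv hxa).const_mul z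
  -- derivative in x
  have hDx : HasDerivAt (fun s => φ s y z)
      (![f' x,
        k * Real.cos (y / (k * x)) + (y / x) * Real.sin (y / (k * x)),
        k * Real.sin (y / (k * x)) - (y / x) * Real.cos (y / (k * x)),
        α * (x ^ α / x) * Real.cos (z / x ^ α) + (α * z / x) * Real.sin (z / x ^ α),
        α * (x ^ α / x) * Real.sin (z / x ^ α) - (α * z / x) * Real.cos (z / x ^ α)]) x := by
    rw [show (fun s => φ s y z) = (fun s =>
      ![f s, k * s * Real.cos (y / (k * s)), k * s * Real.sin (y / (k * s)),
        s ^ α * Real.cos (z / s ^ α), s ^ α * Real.sin (z / s ^ α)]) from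
      funext fun s => hφ s y z]
    refine hasDerivAt_pi.mpr fun i => ?_
    fin_cases i <;> simp only [Matrix.cons_val_zero, Matrix.cons_val_one, Matrix.head_cons,
      Matrix.cons_val_two, Matrix.tail_cons, Matrix.cons_val_three, Matrix.cons_val_four,
      Matrix.cons_val_fin_one, Fin.reduceFinMk, Fin.zero_eta, Fin.mk_one, Matrix.cons_val]
    · exact hf x hxm
    · have h := hks.mul hu.cos
      refine h.congr_deriv ?_
      field_simp
      try ring
    · have h := hks.mul hu.sin
      refine h.congr_deriv ?_
      field_simp
      try ring
    · have h := hp.mul hv.cos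
      refine h.congr_deriv ?_
      rw [hα1]
      field_simp
    · have h := hp.mul hv.sin
      refine h.congr_deriv ?_
      rw [hα1]
      field_simp
      ring
  -- derivative in y
  have hq : HasDerivAt (fun s : ℝ => s / (k * x)) (k * x)⁻¹ y := by
    simpa [div_eq_mul_inv] using (hasDerivAt_id y).mul_const (k * x)⁻¹
  have hDy : HasDerivAt (fun s => φ x s z)
      (![0, -Real.sin (y / (k * x)), Real.cos (y / (k * x)), 0, 0]) y := by
    rw [show (fun s => φ x s z) = (fun s =>
      ![f x, k * x * Real.cos (s / (k * x)), k * x * Real.sin (s / (k * x)),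
        x ^ α * Real.cos (z / x ^ α), x ^ α * Real.sin (z / x ^ α)]) from
      funext fun s => hφ x s z]
    refine hasDerivAt_pi.mpr fun i => ?_
    fin_cases i <;> simp only [Matrix.cons_val_zero, Matrix.cons_val_one, Matrix.head_cons,
      Matrix.cons_val_two, Matrix.tail_cons, Matrix.cons_val_three, Matrix.cons_val_four,
      Matrix.cons_val_fin_one, Fin.reduceFinMk, Fin.zero_eta, Fin.mk_one, Matrix.cons_val]
    · exact hasDerivAt_const y (f x)
    · have h := hq.cos.const_mul (k * x)
      refine h.congr_deriv ?_
      field_simp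
      try ring
    · have h := hq.sin.const_mul (k * x)
      refine h.congr_deriv ?_
      field_simp
      try ring
    · exact hasDerivAt_const y (x ^ α * Real.cos (z / x ^ α))
    · exact hasDerivAt_const y (x ^ α * Real.sin (z / x ^ α))
  -- derivative in z
  have hr : HasDerivAt (fun s : ℝ => s / x ^ α) (x ^ α)⁻¹ z := by
    simpa [div_eq_mul_inv] using (hasDerivAt_id z).mul_const (x ^ α)⁻¹
  have hDz : HasDerivAt (fun s => φ x y s)
      (![0, 0, 0, -Real.sin (z / x ^ α), Real.cos (z / x ^ α)]) z := by
    rw [show (fun s => φ x y s) = (fun s =>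
      ![f x, k * x * Real.cos (y / (k * x)), k * x * Real.sin (y / (k * x)),
        x ^ α * Real.cos (s / x ^ α), x ^ α * Real.sin (s / x ^ α)]) from
      funext fun s => hφ x y s]
    refine hasDerivAt_pi.mpr fun i => ?_
    fin_cases i <;> simp only [Matrix.cons_val_zero, Matrix.cons_val_one, Matrix.head_cons,
      Matrix.cons_val_two, Matrix.tail_cons, Matrix.cons_val_three, Matrix.cons_val_four,
      Matrix.cons_val_fin_one, Fin.reduceFinMk, Fin.zero_eta, Fin.mk_one, Matrix.cons_val]
    · exact hasDerivAt_const z (f x)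
    · exact hasDerivAt_const z (k * x * Real.cos (y / (k * x)))
    · exact hasDerivAt_const z (k * x * Real.sin (y / (k * x)))
    · have h := hr.cos.const_mul (x ^ α)
      refine h.congr_deriv ?_
      field_simp
      try ring
    · have h := hr.sin.const_mul (x ^ α)
      refine h.congr_deriv ?_
      field_simp
      try ring
  have pyth1 := Real.sin_sq_add_cos_sq (y / (k * x))
  have pyth2 := Real.sin_sq_add_cos_sq (z / x ^ α)
  have hcon2 : f' x ^ 2 = 1 / x ^ 2 - k ^ 2 - α ^ 2 * (x ^ α / x) ^ 2 := by
    rw [hcon x hxm, show (2 : ℝ) * α = α + α by ring, Real.rpow_add hx]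
    field_simp
  rw [hDx.deriv, hDy.deriv, hDz.deriv]
  refine ⟨?_, ?_, ?_, ?_, ?_, ?_⟩ <;>
    simp only [dotProduct, Fin.sum_univ_five, Matrix.cons_val_zero, Matrix.cons_val_one,
      Matrix.head_cons, Matrix.cons_val_two, Matrix.tail_cons, Matrix.cons_val_three,
      Matrix.cons_val_four, Matrix.cons_val_fin_one]
  · linear_combination hcon2 + (k ^ 2 + (y / x) ^ 2) * pyth1 +
      (α ^ 2 * (x ^ α / x) ^ 2 + (α * z / x) ^ 2) * pyth2
  · linear_combination (-(y / x)) * pyth1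
  · linear_combination (-(α * z / x)) * pyth2
  · linear_combination pyth1
  · linear_combination pyth2
  · ring
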